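/- Let 𝒦 = ℂ((t)) be the field of formal Laurent series, 𝒪 = ℂ[[t]], and L₀ := 𝒪ⁿ ⊆ 𝒦ⁿ. Define the residue pairing ⟨v, w⟩ := (coefficient of t⁰ in Σ_{i=1}^{n} v_i w_i) for v, w ∈ 𝒦ⁿ (i.e. ⟨v,w⟩ = Res_{t=0} (ᵀv·w) dt/t). Let g ∈ GL_n(𝒦) have all entries in 𝒪, so that gL₀ ⊆ L₀ and tL₀ ⊆ t·ᵀg⁻¹L₀. Then: (1) ⟨gu, t·ᵀg⁻¹u′⟩ = 0 for all u, u′ ∈ L₀, and ⟨u, tu′⟩ = 0 for all u, u′ ∈ L₀; hence ⟨−,−⟩ descends to a ℂ-bilinear pairing (L₀ / gL₀) × ((t·ᵀg⁻¹L₀) / tL₀) → ℂ; (2) this induced pairing is perfect, i.e. it identifies the finite-dimensional ℂ-vector space (t·ᵀg⁻¹L₀)/tL₀ with the dual space (L₀ / gL₀)*. -/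

import Mathlib

noncomputable section

open Matrix

/-- The field `𝒦 = ℂ((t))` of formal Laurent series. -/
abbrev Kf : Type := LaurentSeries ℂ

/-- The uniformizer `t ∈ 𝒦`. -/
def tvar : Kf := HahnSeries.single (1 : ℤ) (1 : ℂ)

instance : IsScalarTower ℂ Kf Kf :=
  ⟨fun c x y => by
    show (c • x) * y = c • (x * y)
    rw [← HahnSeries.single_zero_mul_eq_smul, ← HahnSeries.single_zero_mul_eq_smul, mul_assoc]⟩

instance : SMulCommClass ℂ Kf Kf :=
  ⟨fun c x y => by
    show c • (x * y) = x * (c • y)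
    rw [← HahnSeries.single_zero_mul_eq_smul, ← HahnSeries.single_zero_mul_eq_smul,
      mul_left_comm]⟩

/-- The residue pairing `⟨v, w⟩ = Res_{t=0} (ᵀv·w) dt/t`, i.e. the coefficient of `t⁰`
in `Σ_i v_i w_i`. -/
def resPairing (n : ℕ) (v w : Fin n → Kf) : ℂ :=
  (∑ i, v i * w i).coeff 0

/-- The standard lattice `L₀ = 𝒪ⁿ ⊆ 𝒦ⁿ`, as a ℂ-subspace of `𝒦ⁿ`: the vectors all of
whose entries are (images of) formal power series. -/
def stdLatt (n : ℕ) : Submodule ℂ (Fin n → Kf) where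
  carrier := {v | ∀ i, ∃ p : PowerSeries ℂ, v i = ↑p}
  zero_mem' := fun i => ⟨0, by simp⟩
  add_mem' := by
    rintro v w hv hw i
    obtain ⟨p, hp⟩ := hv i
    obtain ⟨q, hq⟩ := hw i
    exact ⟨p + q, by simp [hp, hq]⟩
  smul_mem' := by
    intro c v hv i
    obtain ⟨p, hp⟩ := hv i
    refine ⟨c • p, ?_⟩
    rw [Pi.smul_apply, hp, PowerSeries.coe_smul]

/-- The sublattice `g·L₀` for a matrix `g` over `𝒦`. -/
def matLatt (n : ℕ) (A : Matrix (Fin n) (Fin n) Kf) : Submodule ℂ (Fin n → Kf) :=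
  Submodule.map ((Matrix.mulVecLin A).restrictScalars ℂ) (stdLatt n)

/- ### Auxiliary lemmas -/

lemma Kf.coeff_sum {ι : Type*} (s : Finset ι) (f : ι → Kf) (m : ℤ) :
    (∑ i ∈ s, f i).coeff m = ∑ i ∈ s, (f i).coeff m := by
  classical
  induction s using Finset.cons_induction with
  | empty => simp
  | cons a s ha ih => simp [Finset.sum_insert ha, ih]

lemma Kf.tvar_mul_coeff_zero (f : Kf) : (tvar * f).coeff 0 = f.coeff (-1) := by
  have := HahnSeries.coeff_single_mul_add (r := (1:ℂ)) (x := f) (a := (-1:ℤ)) (b := (1:ℤ))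
  simpa [tvar] using this

lemma Kf.coe_coeff_neg (p : PowerSeries ℂ) (m : ℤ) (hm : m < 0) : ((p : Kf)).coeff m = 0 := by
  rw [PowerSeries.coeff_coe, if_pos hm]

lemma Kf.exists_powerSeries (f : Kf) (h : ∀ m : ℤ, m < 0 → f.coeff m = 0) :
    ∃ p : PowerSeries ℂ, f = ↑p := by
  refine ⟨PowerSeries.mk fun n => f.coeff n, ?_⟩
  ext m
  rw [PowerSeries.coeff_coe]
  split_ifs with hm
  · exact h m hm
  · rw [PowerSeries.coeff_mk]
    congr 1
    omega

/-- The dot product of two power-series vectors is a power series, so has no residue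
after multiplication by `t⁻¹`... concretely: negative coefficients vanish. -/
lemma Kf.dot_coeff_neg {n : ℕ} (u u' : Fin n → Kf) (hu : u ∈ stdLatt n)
    (hu' : u' ∈ stdLatt n) (m : ℤ) (hm : m < 0) : (u ⬝ᵥ u').coeff m = 0 := by
  rw [dotProduct, Kf.coeff_sum]
  refine Finset.sum_eq_zero fun i _ => ?_
  obtain ⟨p, hp⟩ := hu i
  obtain ⟨q, hq⟩ := hu' i
  rw [hp, hq, ← PowerSeries.coe_mul]
  exact Kf.coe_coeff_neg _ m hm


lemma smul_mulVec' {n : ℕ} (a : Kf) (B : Matrix (Fin n) (Fin n) Kf) (u : Fin n → Kf) :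
    (a • B).mulVec u = a • (B.mulVec u) := Matrix.smul_mulVec a B u

lemma dot_smul' {n : ℕ} (a : Kf) (v w : Fin n → Kf) :
    v ⬝ᵥ (a • w) = a * (v ⬝ᵥ w) := dotProduct_smul a v w

lemma resPairing_eq (n : ℕ) (v w : Fin n → Kf) : resPairing n v w = (v ⬝ᵥ w).coeff 0 := rfl

lemma coe_X_pow (m : ℕ) : ((PowerSeries.X ^ m : PowerSeries ℂ) : Kf)
    = HahnSeries.single (m : ℤ) 1 := by
  rw [PowerSeries.coe_pow, PowerSeries.coe_X, HahnSeries.single_pow]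
  simp

/-- the `j`-th "monomial basis vector" `t^m e_j`. -/
def basVec (n : ℕ) (j : Fin n) (m : ℕ) : Fin n → Kf :=
  fun i => if i = j then ((PowerSeries.X ^ m : PowerSeries ℂ) : Kf) else 0

lemma basVec_mem (n : ℕ) (j : Fin n) (m : ℕ) : basVec n j m ∈ stdLatt n := by
  intro i
  by_cases h : i = j
  · exact ⟨PowerSeries.X ^ m, by simp [basVec, h]⟩
  · exact ⟨0, by simp [basVec, h]⟩

lemma dot_basVec {n : ℕ} (x : Fin n → Kf) (j : Fin n) (m : ℕ) :
    x ⬝ᵥ basVec n j m = x j * HahnSeries.single (m : ℤ) 1 := by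
  simp [dotProduct, basVec, mul_ite, coe_X_pow]


/-- Let `g ∈ GL_n(𝒦)` have all entries in `𝒪 = ℂ[[t]]`.  Then:
(1) `⟨gu, t·ᵀg⁻¹u′⟩ = 0` and `⟨u, tu′⟩ = 0` for all `u, u′ ∈ L₀`, so the residue
pairing descends to a pairing `(L₀/gL₀) × ((t·ᵀg⁻¹L₀)/tL₀) → ℂ`;
(2) the induced pairing is perfect: an element of `L₀` is orthogonal to all of
`t·ᵀg⁻¹L₀` iff it lies in `gL₀`, and an element of `t·ᵀg⁻¹L₀` is orthogonal to all of
`L₀` iff it lies in `tL₀`; hence `(t·ᵀg⁻¹L₀)/tL₀` is identified with `(L₀/gL₀)*`. -/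
theorem residue_pairing_perfect (n : ℕ) (g : GL (Fin n) Kf)
    (hg : ∀ i j, ∃ p : PowerSeries ℂ, (g : Matrix (Fin n) (Fin n) Kf) i j = ↑p) :
    (∀ u ∈ stdLatt n, ∀ u' ∈ stdLatt n,
      resPairing n ((g : Matrix (Fin n) (Fin n) Kf).mulVec u)
        ((tvar • ((g⁻¹ : GL (Fin n) Kf) : Matrix (Fin n) (Fin n) Kf)ᵀ).mulVec u') = 0) ∧
    (∀ u ∈ stdLatt n, ∀ u' ∈ stdLatt n, resPairing n u (tvar • u') = 0) ∧
    (∀ v ∈ stdLatt n,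
      ((∀ w ∈ matLatt n (tvar • ((g⁻¹ : GL (Fin n) Kf) : Matrix (Fin n) (Fin n) Kf)ᵀ),
          resPairing n v w = 0) ↔
        v ∈ matLatt n (g : Matrix (Fin n) (Fin n) Kf))) ∧
    (∀ w ∈ matLatt n (tvar • ((g⁻¹ : GL (Fin n) Kf) : Matrix (Fin n) (Fin n) Kf)ᵀ),
      ((∀ v ∈ stdLatt n, resPairing n v w = 0) ↔
        w ∈ matLatt n (tvar • (1 : Matrix (Fin n) (Fin n) Kf)))) := by
  set G : Matrix (Fin n) (Fin n) Kf := (g : Matrix (Fin n) (Fin n) Kf) with hG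
  set Gi : Matrix (Fin n) (Fin n) Kf := ((g⁻¹ : GL (Fin n) Kf) : Matrix (Fin n) (Fin n) Kf)
    with hGi
  have hGiG : Gi * G = 1 := g.inv_mul
  have hGGi : G * Gi = 1 := g.mul_inv
  -- key computation for part (1)
  have key1 : ∀ u u' : Fin n → Kf,
      resPairing n (G.mulVec u) ((tvar • Giᵀ).mulVec u') = (u ⬝ᵥ u').coeff (-1) := by
    intro u u'
    rw [resPairing_eq, smul_mulVec', dot_smul',
      Kf.tvar_mul_coeff_zero, dotProduct_mulVec, vecMul_transpose, mulVec_mulVec,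
      hGiG, one_mulVec]
  -- key computation for part (3): pairing of v with t·ᵀg⁻¹ u'
  have key3 : ∀ v u' : Fin n → Kf,
      resPairing n v ((tvar • Giᵀ).mulVec u') = ((Gi.mulVec v) ⬝ᵥ u').coeff (-1) := by
    intro v u'
    rw [resPairing_eq, smul_mulVec', dot_smul',
      Kf.tvar_mul_coeff_zero, dotProduct_mulVec, vecMul_transpose]
  have h1 : ∀ u ∈ stdLatt n, ∀ u' ∈ stdLatt n,
      resPairing n (G.mulVec u) ((tvar • Giᵀ).mulVec u') = 0 := by
    intro u hu u' hu'
    rw [key1]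
    exact Kf.dot_coeff_neg u u' hu hu' _ (by norm_num)
  have h2 : ∀ u ∈ stdLatt n, ∀ u' ∈ stdLatt n, resPairing n u (tvar • u') = 0 := by
    intro u hu u' hu'
    have : resPairing n u (tvar • u') = (tvar * (u ⬝ᵥ u')).coeff 0 := by
      rw [resPairing_eq, dot_smul']
    rw [this, Kf.tvar_mul_coeff_zero]
    exact Kf.dot_coeff_neg u u' hu hu' _ (by norm_num)
  refine ⟨h1, h2, ?_, ?_⟩
  · -- part (3)
    intro v hv
    constructor
    · intro H
      set x : Fin n → Kf := Gi.mulVec v with hx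
      have hxj : ∀ j, ∃ p : PowerSeries ℂ, x j = ↑p := by
        intro j
        refine Kf.exists_powerSeries (x j) fun k hk => ?_
        have hm' : (-1 : ℤ) - (((-1 - k).toNat : ℤ)) = k := by omega
        have hmem : (tvar • Giᵀ).mulVec (basVec n j ((-1 - k).toNat)) ∈
            matLatt n (tvar • Giᵀ) :=
          ⟨basVec n j _, basVec_mem n j _, by rw [LinearMap.restrictScalars_apply,
            Matrix.mulVecLin_apply]⟩
        have h0 := H _ hmem
        rw [key3, ← hx, dot_basVec] at h0
        have := HahnSeries.coeff_mul_single_add (r := (1:ℂ)) (x := x j)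
          (a := (-1 - ((-1 - k).toNat : ℤ))) (b := (((-1 - k).toNat : ℤ)))
        rw [show (-1 - ((-1 - k).toNat : ℤ)) + ((-1 - k).toNat : ℤ) = -1 by ring] at this
        rw [this] at h0
        have hk' : (-1 : ℤ) - ((-1 - k).toNat : ℤ) = k := by omega
        rw [hk'] at h0
        simpa using h0
      refine ⟨x, hxj, ?_⟩
      rw [LinearMap.restrictScalars_apply, Matrix.mulVecLin_apply, hx, mulVec_mulVec,
        hGGi, one_mulVec]
    · rintro ⟨u, hu, rfl⟩ w ⟨u', hu', rfl⟩
      rw [LinearMap.restrictScalars_apply, Matrix.mulVecLin_apply]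
      rw [LinearMap.restrictScalars_apply, Matrix.mulVecLin_apply]
      exact h1 u hu u' hu'
  · -- part (4)
    intro w hw
    constructor
    · intro H
      have hwk : ∀ j, ∀ k : ℤ, k ≤ 0 → (w j).coeff k = 0 := by
        intro j k hk
        have h0 := H _ (basVec_mem n j (-k).toNat)
        rw [resPairing_eq] at h0
        have hdot : basVec n j (-k).toNat ⬝ᵥ w
            = HahnSeries.single (((-k).toNat : ℤ)) 1 * w j := by
          simp [dotProduct, basVec, ite_mul, coe_X_pow]
        rw [hdot] at h0
        have := HahnSeries.coeff_single_mul_add (r := (1:ℂ)) (x := w j)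
          (a := (-(((-k).toNat : ℤ)))) (b := (((-k).toNat : ℤ)))
        rw [show (-(((-k).toNat : ℤ))) + (((-k).toNat : ℤ)) = 0 by ring] at this
        rw [this] at h0
        have hk' : -(((-k).toNat : ℤ)) = k := by omega
        rw [hk'] at h0
        simpa using h0
      set x : Fin n → Kf := fun j => HahnSeries.single (-1 : ℤ) (1:ℂ) * w j with hx
      have hxj : ∀ j, ∃ p : PowerSeries ℂ, x j = ↑p := by
        intro j
        refine Kf.exists_powerSeries (x j) fun k hk => ?_
        have := HahnSeries.coeff_single_mul_add (r := (1:ℂ)) (x := w j)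
          (a := (k + 1 : ℤ)) (b := (-1 : ℤ))
        rw [show (k + 1 : ℤ) + (-1) = k by ring] at this
        rw [hx]
        simp only []
        rw [this, one_mul]
        exact hwk j (k + 1) (by omega)
      refine ⟨x, hxj, ?_⟩
      rw [LinearMap.restrictScalars_apply, Matrix.mulVecLin_apply, smul_mulVec',
        one_mulVec]
      funext j
      show tvar • x j = w j
      rw [smul_eq_mul, hx]
      simp only []
      rw [← mul_assoc, tvar, HahnSeries.single_mul_single]
      norm_num [HahnSeries.single_zero_one]
    · rintro ⟨u, hu, rfl⟩ v hv
      rw [LinearMap.restrictScalars_apply, Matrix.mulVecLin_apply, smul_mulVec',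
        one_mulVec]
      exact h2 v hv u hu
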